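/- Let K be an abstract elementary class in a finitary language L with λ = LS(K), and let M, N ∈ K with M an L-substructure of N. Then M ≤_K N if and only if for every set A ⊆ |M| of cardinality λ that is closed under the interpretations in M of the function symbols of L, the following two conditions are equivalent: (the induced structure on A belongs to K and A ≤_K M) and (the induced structure on A belongs to K and A ≤_K N). -/

import Mathlib

universe u

open FirstOrder FirstOrder.Language Cardinal

namespace AECFormalization

variable (L : FirstOrder.Language.{u, u}) (U : Type u)

/-- An `L`-structure whose universe is a subset of a fixed ambient type `U`. -/
structure SStr : Type u where
  s : Set U
  str : L.Structure s

attribute [instance] SStr.str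

variable {L U}

/-- The literal `L`-substructure relation between structures with universes inside
the same ambient type: the universe of `M` is a subset of that of `N`, and the
interpretations of all function and relation symbols agree. -/
def SStr.Sub (M N : SStr L U) : Prop :=
  ∃ h : M.s ⊆ N.s,
    (∀ (n : ℕ) (f : L.Functions n) (x : Fin n → M.s),
      ((Structure.funMap f x : M.s) : U)
        = ((Structure.funMap f (fun i => Set.inclusion h (x i)) : N.s) : U)) ∧
    (∀ (n : ℕ) (r : L.Relations n) (x : Fin n → M.s),
      Structure.RelMap r x ↔ Structure.RelMap r (fun i => Set.inclusion h (x i)))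

/-- `M` and `N` are isomorphic `L`-structures. -/
def SStr.Iso (M N : SStr L U) : Prop :=
  Nonempty (M.s ≃[L] N.s)

/-- `(M₁, N₁) ≅ (M₂, N₂)` : there is an isomorphism `f : N₁ ≅ N₂` carrying `M₁`
exactly onto `M₂` (so that `f ↾ M₁ : M₁ ≅ M₂` whenever the `Mᵢ` are substructures
of the `Nᵢ`). -/
def PairIso (M₁ N₁ M₂ N₂ : SStr L U) : Prop :=
  ∃ f : N₁.s ≃[L] N₂.s, ∀ x : N₁.s, (x : U) ∈ M₁.s ↔ ((f x : N₂.s) : U) ∈ M₂.s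

/-- `K`, together with the strong substructure relation `le`, is an abstract elementary
class with Löwenheim–Skolem number `lam`, among `L`-structures with universe contained
in the ambient type `U` (only members of cardinality `≥ lam = LS(K)` are considered). -/
structure IsAEC (L : FirstOrder.Language.{u, u}) (U : Type u) (K : Set (SStr L U))
    (le : SStr L U → SStr L U → Prop) (lam : Cardinal.{u}) : Prop where
  le_refl : ∀ M ∈ K, le M M
  le_trans : ∀ {M N P : SStr L U}, le M N → le N P → le M P
  le_antisymm : ∀ {M N : SStr L U}, le M N → le N M → M = N
  mem_of_le : ∀ {M N : SStr L U}, le M N → M ∈ K ∧ N ∈ K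
  sub_of_le : ∀ {M N : SStr L U}, le M N → M.Sub N
  mem_of_iso : ∀ {M N : SStr L U}, M ∈ K → M.Iso N → N ∈ K
  le_of_iso : ∀ {M₁ N₁ M₂ N₂ : SStr L U}, le M₁ N₁ → M₂.Sub N₂ →
    PairIso M₁ N₁ M₂ N₂ → le M₂ N₂
  coherence : ∀ {M₁ M₂ M₃ : SStr L U}, le M₁ M₃ → le M₂ M₃ → M₁.Sub M₂ → le M₁ M₂
  lam_infinite : ℵ₀ ≤ lam
  lam_ge_card : L.card ≤ lam
  card_mem : ∀ M ∈ K, lam ≤ #M.s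
  loewenheim_skolem : ∀ M ∈ K, ∀ A : Set U, A ⊆ M.s →
    ∃ N : SStr L U, le N M ∧ A ⊆ N.s ∧ #N.s ≤ lam + #A
  ls_minimal : ∀ μ : Cardinal.{u}, ℵ₀ ≤ μ → L.card ≤ μ →
    (∀ M ∈ K, ∀ A : Set U, A ⊆ M.s →
      ∃ N : SStr L U, le N M ∧ A ⊆ N.s ∧ #N.s ≤ μ + #A) → lam ≤ μ
  chain : ∀ (ι : Type u) [LinearOrder ι] [IsWellOrder ι (· < ·)] [Nonempty ι]
    (M : ι → SStr L U), (∀ i j, i < j → le (M i) (M j)) → (∀ i, M i ∈ K) →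
    ∃ MU : SStr L U, MU.s = ⋃ i, (M i).s ∧ MU ∈ K ∧ (∀ i, le (M i) MU) ∧
      ∀ N : SStr L U, (∀ i, le (M i) N) → le MU N

/-- `I(lam, K)` : the number of isomorphism classes of members of `K` of cardinality
`lam` (computed among structures with universe inside the ambient type). -/
noncomputable def numModels (K : Set (SStr L U)) (lam : Cardinal.{u}) : Cardinal.{u} :=
  #(Quot fun M N : {M : SStr L U // M ∈ K ∧ #M.s = lam} => M.1.Iso N.1)

/-- `I₂(lam, K)` : the number of isomorphism classes of pairs `(M, N)` with
`M ≤_K N`, both of cardinality `lam`. -/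
noncomputable def numPairs (K : Set (SStr L U)) (le : SStr L U → SStr L U → Prop)
    (lam : Cardinal.{u}) : Cardinal.{u} :=
  #(Quot fun p q : {p : SStr L U × SStr L U //
      p.1 ∈ K ∧ p.2 ∈ K ∧ le p.1 p.2 ∧ #p.1.s = lam ∧ #p.2.s = lam} =>
    PairIso p.1.1 p.1.2 q.1.1 q.1.2)

end AECFormalization

namespace AECFormalization

variable {L : FirstOrder.Language.{u, u}} {U : Type u}

theorem incl_self {s : Set U} (h : s ⊆ s) {n : ℕ} (x : Fin n → s) :
    (fun i => Set.inclusion h (x i)) = x := by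
  funext i; exact Subtype.ext rfl

theorem incl_comp {s t u : Set U} (h₁ : s ⊆ t) (h₂ : t ⊆ u) (h₃ : s ⊆ u) {n : ℕ}
    (x : Fin n → s) :
    (fun i => Set.inclusion h₂ (Set.inclusion h₁ (x i))) =
      (fun i => Set.inclusion h₃ (x i)) := by
  funext i; exact Subtype.ext rfl

theorem SStr.Sub.refl (M : SStr L U) : M.Sub M := by
  refine ⟨subset_rfl, fun n f x => ?_, fun n r x => ?_⟩ <;> rw [incl_self]

theorem SStr.Sub.trans' {A B C : SStr L U} (h₁ : A.Sub B) (h₂ : B.Sub C) : A.Sub C := by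
  obtain ⟨hAB, hf₁, hr₁⟩ := h₁
  obtain ⟨hBC, hf₂, hr₂⟩ := h₂
  refine ⟨hAB.trans hBC, fun n f x => ?_, fun n r x => ?_⟩
  · rw [hf₁ n f x, hf₂ n f (fun i => Set.inclusion hAB (x i)),
      incl_comp hAB hBC (hAB.trans hBC)]
  · rw [hr₁ n r x, hr₂ n r (fun i => Set.inclusion hAB (x i)),
      incl_comp hAB hBC (hAB.trans hBC)]

/-- If `A` and `B` are both substructures of `M` and `A.s ⊆ B.s`, then `A` is a
substructure of `B`. -/
theorem SStr.Sub.restrict {A B M : SStr L U} (hA : A.Sub M) (hB : B.Sub M)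
    (h : A.s ⊆ B.s) : A.Sub B := by
  obtain ⟨hAM, hfA, hrA⟩ := hA
  obtain ⟨hBM, hfB, hrB⟩ := hB
  refine ⟨h, fun n f x => ?_, fun n r x => ?_⟩
  · have e2 := hfB n f (fun i => Set.inclusion h (x i))
    rw [incl_comp h hBM hAM] at e2
    rw [hfA n f x, ← e2]
  · have e2 := hrB n r (fun i => Set.inclusion h (x i))
    rw [incl_comp h hBM hAM] at e2
    rw [hrA n r x, ← e2]

/-- Proposition 3.15(1) of the paper.  Let `K` be an AEC with
`lam = LS(K)` and let `M, N ∈ K` with `M` an `L`-substructure of `N`.  Then `M ≤_K N`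
if and only if for every `L`-substructure `A` of `M` of cardinality `lam` (i.e. every
subset of `|M|` of cardinality `lam` closed under the function symbols, with its
induced structure), the conditions `(A ∈ K ∧ A ≤_K M)` and `(A ∈ K ∧ A ≤_K N)` are
equivalent. -/
theorem le_iff_sigma_sub (L : FirstOrder.Language.{u, u}) (U : Type u)
    (K : Set (SStr L U)) (le : SStr L U → SStr L U → Prop) (lam : Cardinal.{u})
    (hK : IsAEC L U K le lam) (M N : SStr L U) (hM : M ∈ K) (hN : N ∈ K)
    (hsub : M.Sub N) :
    le M N ↔
      ∀ A : SStr L U, A.Sub M → #A.s = lam →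
        ((A ∈ K ∧ le A M) ↔ (A ∈ K ∧ le A N)) := by
  constructor
  · intro hMN A hAM _
    exact ⟨fun h => ⟨h.1, hK.le_trans h.2 hMN⟩,
           fun h => ⟨h.1, hK.coherence h.2 hMN hAM⟩⟩
  · intro hcond
    suffices h : ∀ κ : Cardinal.{u}, ∀ M' : SStr L U, #M'.s ≤ κ → M' ∈ K → M'.Sub N →
        (∀ A : SStr L U, A.Sub M' → #A.s = lam →
          ((A ∈ K ∧ le A M') ↔ (A ∈ K ∧ le A N))) →
        le M' N by
      exact h _ M le_rfl hM hsub hcond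
    intro κ
    induction κ using Cardinal.lt_wf.induction with
    | _ κ IH =>
    intro M' hcard hM'K hsubN cond
    rcases lt_or_eq_of_le hcard with hlt | heq
    · exact IH _ hlt M' le_rfl hM'K hsubN cond
    subst heq
    have hlamle : lam ≤ #M'.s := hK.card_mem M' hM'K
    rcases eq_or_lt_of_le hlamle with hbase | hlam_lt
    · exact ((cond M' (SStr.Sub.refl M') hbase.symm).mp ⟨hM'K, hK.le_refl M' hM'K⟩).2
    -- Inductive step: `lam < #M'.s`.
    have hinf : ℵ₀ ≤ #M'.s := hK.lam_infinite.trans hlamle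
    set κ := #M'.s with hκ
    let ι : Type u := κ.ord.ToType
    haveI : IsWellOrder ι (· < ·) :=
      isWellOrder_lt
    haveI : Nonempty ι := by
      refine Ordinal.toType_nonempty_iff_ne_zero.mpr fun h0 => ?_
      exact (Cardinal.aleph0_pos.trans_le hinf).ne'
        (by rw [← Cardinal.card_ord κ, h0, Ordinal.card_zero])
    have hmkι : #ι = κ := by rw [Cardinal.mk_toType, Cardinal.card_ord]
    let e : ι ≃ M'.s := Classical.choice (Cardinal.eq.mp (hmkι.trans hκ))
    -- the transfinite construction of the chain
    let Bs : ∀ i : ι, (∀ j, j < i → SStr L U) → Set U := fun i rec =>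
      ((Set.range fun j : Set.Iic i => ((e j.1 : M'.s) : U)) ∪
        ⋃ j : Set.Iio i, (rec j.1 j.2).s) ∩ M'.s
    have exN : ∀ (i : ι) (rec : ∀ j, j < i → SStr L U),
        ∃ P : SStr L U, le P M' ∧ Bs i rec ⊆ P.s ∧ #P.s ≤ lam + #(Bs i rec) :=
      fun i rec => hK.loewenheim_skolem M' hM'K _ Set.inter_subset_right
    have wf : WellFounded ((· < ·) : ι → ι → Prop) := IsWellFounded.wf
    let A : ι → SStr L U := wf.fix fun i rec => Classical.choose (exN i rec)
    have hspec : ∀ i : ι, le (A i) M' ∧ Bs i (fun j _ => A j) ⊆ (A i).s ∧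
        #(A i).s ≤ lam + #(Bs i (fun j _ => A j)) := by
      intro i
      have hfix : A i = Classical.choose (exN i fun j _ => A j) :=
        wf.fix_eq (fun i rec => Classical.choose (exN i rec)) i
      rw [hfix]
      exact Classical.choose_spec (exN i fun j _ => A j)
    have hleM : ∀ i, le (A i) M' := fun i => (hspec i).1
    have hAK : ∀ i, A i ∈ K := fun i => (hK.mem_of_le (hleM i)).1
    have hAsub : ∀ i, (A i).Sub M' := fun i => hK.sub_of_le (hleM i)
    have hAss : ∀ i, (A i).s ⊆ M'.s := fun i => (hAsub i).choose
    have hcontains : ∀ i j : ι, j ≤ i → ((e j : M'.s) : U) ∈ (A i).s := fun i j hj =>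
      (hspec i).2.1 ⟨Or.inl ⟨⟨j, hj⟩, rfl⟩, (e j).2⟩
    have hmono : ∀ j i : ι, j < i → (A j).s ⊆ (A i).s := fun j i hji x hx =>
      (hspec i).2.1 ⟨Or.inr (Set.mem_iUnion.mpr ⟨⟨j, hji⟩, hx⟩), hAss j hx⟩
    have hchain : ∀ j i : ι, j < i → le (A j) (A i) := fun j i h =>
      hK.coherence (hleM j) (hleM i) (SStr.Sub.restrict (hAsub j) (hAsub i) (hmono j i h))
    -- cardinality bound on the members of the chain
    have hbound : ∀ i : ι, #(A i).s ≤ lam + #(Set.Iic i) := by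
      intro i
      induction i using wf.induction with
      | _ i IH2 =>
      set c : Cardinal.{u} := lam + #(Set.Iic i) with hc
      have hcinf : ℵ₀ ≤ c := hK.lam_infinite.trans (self_le_add_right _ _)
      have hIic : #(Set.Iic i) ≤ c := self_le_add_left _ _
      have h1 : #(Bs i fun j _ => A j) ≤ c := by
        refine le_trans (Cardinal.mk_le_mk_of_subset Set.inter_subset_left) ?_
        refine le_trans (Cardinal.mk_union_le _ _) ?_
        have hr : #(Set.range fun j : Set.Iic i => ((e j.1 : M'.s) : U)) ≤ c :=
          le_trans Cardinal.mk_range_le hIic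
        have hu : #(⋃ j : Set.Iio i, (A j.1).s) ≤ c := by
          refine le_trans (Cardinal.mk_iUnion_le _) ?_
          have h2 : #(Set.Iio i) ≤ c :=
            le_trans (Cardinal.mk_le_mk_of_subset Set.Iio_subset_Iic_self) hIic
          have h3 : ⨆ j : Set.Iio i, #(A j.1).s ≤ c := by
            refine ciSup_le' fun j => ?_
            refine le_trans (IH2 j.1 j.2) ?_
            exact add_le_add_right
              (Cardinal.mk_le_mk_of_subset (Set.Iic_subset_Iic.mpr j.2.le)) _
          calc #(Set.Iio i) * ⨆ j : Set.Iio i, #(A j.1).s ≤ c * c :=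
                mul_le_mul' h2 h3
            _ = c := Cardinal.mul_eq_self hcinf
        calc #(Set.range fun j : Set.Iic i => ((e j.1 : M'.s) : U)) +
              #(⋃ j : Set.Iio i, (A j.1).s) ≤ c + c := add_le_add hr hu
          _ = c := Cardinal.add_eq_self hcinf
      refine le_trans (hspec i).2.2 ?_
      calc lam + #(Bs i fun j _ => A j) ≤ lam + c := add_le_add_right h1 _
        _ = c := Cardinal.add_eq_right hcinf (self_le_add_right _ _)
    have hAlt : ∀ i : ι, #(A i).s < κ := by
      intro i
      have h1 : #(Set.Iic i) < κ := by
        rw [← Set.Iio_insert]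
        refine lt_of_le_of_lt Cardinal.mk_insert_le ?_
        exact Cardinal.add_lt_of_lt hinf (Cardinal.mk_Iio_ord_toType i)
          (lt_of_lt_of_le one_lt_aleph0 hinf)
      exact lt_of_le_of_lt (hbound i) (Cardinal.add_lt_of_lt hinf hlam_lt h1)
    -- each member of the chain is ≤ N, by the induction hypothesis
    have hleN : ∀ i, le (A i) N := by
      intro i
      refine IH _ (hAlt i) (A i) le_rfl (hAK i) ((hAsub i).trans' hsubN) ?_
      intro B hBsub hBcard
      constructor
      · rintro ⟨hBK, hBle⟩
        have hBM : le B M' := hK.le_trans hBle (hleM i)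
        exact ⟨hBK, ((cond B (hK.sub_of_le hBM) hBcard).mp ⟨hBK, hBM⟩).2⟩
      · rintro ⟨hBK, hBle⟩
        have hBM : le B M' :=
          ((cond B (hBsub.trans' (hAsub i)) hBcard).mpr ⟨hBK, hBle⟩).2
        exact ⟨hBK, hK.coherence hBM (hleM i) hBsub⟩
    -- take the union of the chain
    obtain ⟨MU, hMUs, hMUK, hleMU, hMUmax⟩ :=
      hK.chain ι A (fun i j h => hchain i j h) hAK
    have hMUeq : MU.s = M'.s := by
      rw [hMUs]
      apply Set.Subset.antisymm (Set.iUnion_subset hAss)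
      intro x hx
      have h := hcontains (e.symm ⟨x, hx⟩) (e.symm ⟨x, hx⟩) le_rfl
      rw [e.apply_symm_apply] at h
      exact Set.mem_iUnion.mpr ⟨_, h⟩
    have hMUM : le MU M' := hMUmax M' hleM
    have hMUN : le MU N := hMUmax N hleN
    have hM'MU : M'.Sub MU :=
      SStr.Sub.restrict (SStr.Sub.refl M') (hK.sub_of_le hMUM) (le_of_eq hMUeq.symm)
    exact hK.le_trans (hK.coherence (hK.le_refl M' hM'K) hMUM hM'MU) hMUN

end AECFormalization
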